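/- Every finite disconnected simple graph that is {claw, K1 ∪ K3}-free has maximum degree at most two; that is, if G is not connected, contains no induced K_{1,3}, and contains no induced subgraph isomorphic to the disjoint union of a vertex and a triangle, then every vertex of G has degree at most two. -/

import Mathlib

open SimpleGraph

/-- `G` is `H`-free: no induced subgraph of `G` is isomorphic to `H`
(an induced copy is a graph embedding). -/
def InducedFree {α β : Type*} (H : SimpleGraph β) (G : SimpleGraph α) : Prop :=
  ¬ Nonempty (H ↪g G)

/-- The claw `K_{1,3}`: center `0` with leaves `1,2,3`. -/
def claw : SimpleGraph (Fin 4) := fromEdgeSet {s(0,1), s(0,2), s(0,3)}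

/-- `K1 ∪ K3`: a triangle `1,2,3` together with the isolated vertex `0`
(the complement of the claw). -/
def K1uK3 : SimpleGraph (Fin 4) := fromEdgeSet {s(1,2), s(1,3), s(2,3)}

def claw_emb {V : Type*} (G : SimpleGraph V) (v a b c : V)
    (hva : G.Adj v a) (hvb : G.Adj v b) (hvc : G.Adj v c)
    (hab : a ≠ b) (hac : a ≠ c) (hbc : b ≠ c)
    (nab : ¬ G.Adj a b) (nac : ¬ G.Adj a c) (nbc : ¬ G.Adj b c) :
    claw ↪g G := by
  refine ⟨⟨![v,a,b,c], ?_⟩, ?_⟩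
  · intro i j h
    fin_cases i <;> fin_cases j <;>
      simp_all [G.ne_of_adj hva, G.ne_of_adj hvb, G.ne_of_adj hvc]
  · intro i j
    show G.Adj (![v,a,b,c] i) (![v,a,b,c] j) ↔ claw.Adj i j
    fin_cases i <;> fin_cases j <;>
      simp_all [claw, Sym2.eq_iff, G.adj_comm]

def coclaw_emb {V : Type*} (G : SimpleGraph V) (w v x y : V)
    (hvx : G.Adj v x) (hvy : G.Adj v y) (hxy : G.Adj x y)
    (hwv : w ≠ v) (hwx : w ≠ x) (hwy : w ≠ y)
    (nwv : ¬ G.Adj w v) (nwx : ¬ G.Adj w x) (nwy : ¬ G.Adj w y) :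
    K1uK3 ↪g G := by
  refine ⟨⟨![w,v,x,y], ?_⟩, ?_⟩
  · intro i j h
    fin_cases i <;> fin_cases j <;>
      simp_all [G.ne_of_adj hvx, G.ne_of_adj hvy, G.ne_of_adj hxy]
  · intro i j
    show G.Adj (![w,v,x,y] i) (![w,v,x,y] j) ↔ K1uK3.Adj i j
    fin_cases i <;> fin_cases j <;>
      simp_all [K1uK3, Sym2.eq_iff, G.adj_comm]

theorem disconnected_claw_coclaw_free_maxdeg_le_two {V : Type*} [Fintype V]
    (G : SimpleGraph V) (hdisc : ¬ G.Connected)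
    (hclaw : InducedFree claw G) (hK1uK3 : InducedFree K1uK3 G) :
    ∀ v a b c : V, G.Adj v a → G.Adj v b → G.Adj v c →
      a = b ∨ a = c ∨ b = c := by
  intro v a b c hva hvb hvc
  by_contra h
  push_neg at h
  obtain ⟨hab, hac, hbc⟩ := h
  -- claw-freeness: some edge among a,b,c
  have hedge : G.Adj a b ∨ G.Adj a c ∨ G.Adj b c := by
    by_contra he; push_neg at he
    exact hclaw ⟨claw_emb G v a b c hva hvb hvc hab hac hbc he.1 he.2.1 he.2.2⟩
  -- a triangle through v
  obtain ⟨x, y, hvx, hvy, hxy⟩ : ∃ x y, G.Adj v x ∧ G.Adj v y ∧ G.Adj x y := by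
    rcases hedge with h | h | h
    · exact ⟨a, b, hva, hvb, h⟩
    · exact ⟨a, c, hva, hvc, h⟩
    · exact ⟨b, c, hvb, hvc, h⟩
  -- a vertex not reachable from v
  haveI : Nonempty V := ⟨v⟩
  have hpre : ¬ G.Preconnected := fun hp => hdisc ⟨hp⟩
  obtain ⟨w, hw⟩ : ∃ w, ¬ G.Reachable v w := by
    by_contra hall; push_neg at hall
    exact hpre fun p q => (hall p).symm.trans (hall q)
  have nwv : ¬ G.Adj w v := fun h => hw h.symm.reachable
  have nwx : ¬ G.Adj w x := fun h => hw (hvx.reachable.trans h.symm.reachable)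
  have nwy : ¬ G.Adj w y := fun h => hw (hvy.reachable.trans h.symm.reachable)
  have hwv : w ≠ v := fun h => hw (h ▸ SimpleGraph.Reachable.refl (G := G) v)
  have hwx : w ≠ x := fun h => hw (h ▸ hvx.reachable)
  have hwy : w ≠ y := fun h => hw (h ▸ hvy.reachable)
  exact hK1uK3 ⟨coclaw_emb G w v x y hvx hvy hxy hwv hwx hwy nwv nwx nwy⟩
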